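/- Let real sequences satisfy d_0 = γΔ and d_{t+1} = d_t/2 + d_t^{2/3}, and let j be the integer with 2^{j-1} < γ^{4/3}Δ ≤ 2^j. If γ is sufficiently small (so that γΔ/2^j > γ^{-1/3}/2 is large), then d_j ≤ 8γΔ/2^j ≤ 8(Δ/2^j)^{1/4}. -/
import Mathlib


set_option maxHeartbeats 1000000 in
/-- With d_0 = γΔ, d_{t+1} = d_t/2 + d_t^{2/3} and j the integer with
2^{j-1} < γ^{4/3}Δ ≤ 2^j, if γ is sufficiently small then
d_j ≤ 8γΔ/2^j ≤ 8(Δ/2^j)^{1/4}. -/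
theorem stmt_18 : ∃ γ₀ : ℝ, 0 < γ₀ ∧
    ∀ γ Δ : ℝ, 0 < γ → γ < γ₀ → γ ^ (-(4 : ℝ) / 3) < Δ →
      ∀ j : ℕ, 1 ≤ j →
        (2 : ℝ) ^ (j - 1) < γ ^ ((4 : ℝ) / 3) * Δ →
        γ ^ ((4 : ℝ) / 3) * Δ ≤ (2 : ℝ) ^ j →
        ∀ d : ℕ → ℝ, d 0 = γ * Δ →
          (∀ t, d (t + 1) = d t / 2 + d t ^ ((2 : ℝ) / 3)) →
          d j ≤ 8 * γ * Δ / 2 ^ j ∧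
          8 * γ * Δ / 2 ^ j ≤ 8 * (Δ / 2 ^ j) ^ ((1 : ℝ) / 4) := by
  refine ⟨(1/54)^3, by norm_num, ?_⟩
  intro γ Δ hγ hγ₀ hΔ j hj hlow hhigh d hd0 hrec
  have hΔpos : 0 < Δ := lt_trans (Real.rpow_pos_of_pos hγ _) hΔ
  have hdpos : ∀ t, 0 < d t := by
    intro t; induction t with
    | zero => rw [hd0]; positivity
    | succ n ih =>
      rw [hrec n]
      have := Real.rpow_pos_of_pos ih ((2:ℝ)/3)
      linarith
  set u : ℝ := (2:ℝ) ^ (-(1/3) : ℝ) with hu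
  have hupos : 0 < u := Real.rpow_pos_of_pos two_pos _
  have hu3 : u^3 = 1/2 := by
    rw [hu, ← Real.rpow_natCast ((2:ℝ) ^ (-(1/3):ℝ)) 3,
      ← Real.rpow_mul (by norm_num : (0:ℝ) ≤ 2)]
    norm_num
  have hulb : (0.79 : ℝ) < u := by nlinarith [hupos, sq_nonneg (u - 0.79)]
  have huub : u < (0.794 : ℝ) := by nlinarith [hupos, sq_nonneg (u - 0.794)]
  set e : ℕ → ℝ := fun t => d t ^ ((1:ℝ)/3) with he
  have hepos : ∀ t, 0 < e t := fun t => Real.rpow_pos_of_pos (hdpos t) _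
  have hecube : ∀ t, (e t)^3 = d t := by
    intro t
    rw [he]
    simp only
    rw [← Real.rpow_natCast (d t ^ ((1:ℝ)/3)) 3, ← Real.rpow_mul (hdpos t).le]
    norm_num
  have hrec2 : ∀ t, (e (t+1))^3 = (e t)^3/2 + (e t)^2 := by
    intro t
    rw [hecube, hecube, hrec t]
    congr 1
    rw [he]
    simp only
    rw [← Real.rpow_natCast (d t ^ ((1:ℝ)/3)) 2, ← Real.rpow_mul (hdpos t).le]
    norm_num
  clear_value u e
  clear hu he
  have hstep : ∀ t, e (t+1) ≤ e t * u + 0.6 := by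
    intro t
    have hx := hepos t
    have hu2 : (0.62:ℝ) ≤ u^2 := by nlinarith
    have hmp : (e t * u)^3 = (e t)^3 / 2 := by rw [mul_pow, hu3]; ring
    have h1 : (e (t+1))^3 ≤ (e t * u + 0.6)^3 := by
      rw [hrec2]
      nlinarith [hmp, hu2, sq_nonneg (e t), hx, hupos, mul_pos hx hupos,
        mul_nonneg (mul_nonneg hx.le hx.le) (by linarith [hu2] : (0:ℝ) ≤ u^2 - 0.62)]
    exact le_of_pow_le_pow_left₀ (by norm_num)
      (by nlinarith [mul_pos hx hupos]) h1
  have hbound : ∀ t, e t ≤ e 0 * u^t + 3 := by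
    intro t; induction t with
    | zero => simp only [pow_zero, mul_one]; linarith [hepos 0]
    | succ n ih =>
      have h2 : e n * u ≤ (e 0 * u^n + 3) * u :=
        mul_le_mul_of_nonneg_right ih hupos.le
      have h3 : e 0 * u^n * u = e 0 * u^(n+1) := by rw [pow_succ]; ring
      have h4 : (0:ℝ) < e 0 * u^n := mul_pos (hepos 0) (pow_pos hupos n)
      calc e (n+1) ≤ e n * u + 0.6 := hstep n
        _ ≤ (e 0 * u^n + 3) * u + 0.6 := by linarith
        _ = e 0 * u^(n+1) + (3*u + 0.6) := by rw [← h3]; ring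
        _ ≤ e 0 * u^(n+1) + 3 := by nlinarith
  -- cube of e 0 * u^j
  have hM3 : (e 0 * u^j)^3 = d 0 / 2^j := by
    rw [mul_pow, hecube, ← pow_mul, mul_comm j 3, pow_mul, hu3]
    rw [div_pow, one_pow, mul_one_div]
  -- 2^j < γ*Δ/27
  have h2jsplit : (2:ℝ)^j = 2 * (2:ℝ)^(j-1) := by
    obtain ⟨k, rfl⟩ := Nat.exists_eq_add_of_le hj
    simp [pow_add, Nat.add_sub_cancel_left]
  have hγ13 : γ ^ ((1:ℝ)/3) < 1/54 := by
    have h := Real.rpow_lt_rpow hγ.le hγ₀ (by norm_num : (0:ℝ) < 1/3)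
    have : (((1:ℝ)/54)^3) ^ ((1:ℝ)/3) = 1/54 := by
      rw [← Real.rpow_natCast ((1:ℝ)/54) 3, ← Real.rpow_mul (by norm_num)]
      norm_num
    rwa [this] at h
  have hγ43 : γ ^ ((4:ℝ)/3) = γ * γ ^ ((1:ℝ)/3) := by
    have h : γ * γ ^ ((1:ℝ)/3) = γ ^ ((1:ℝ) + 1/3) := by
      rw [Real.rpow_add hγ, Real.rpow_one]
    rw [h]; norm_num
  have hγ13pos : 0 < γ ^ ((1:ℝ)/3) := Real.rpow_pos_of_pos hγ _
  have h2j : (2:ℝ)^j < γ * Δ / 27 := by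
    rw [h2jsplit]
    have : γ ^ ((4:ℝ)/3) * Δ = (γ * Δ) * γ ^ ((1:ℝ)/3) := by rw [hγ43]; ring
    rw [this] at hlow
    have hlt : (γ * Δ) * γ ^ ((1:ℝ)/3) < (γ * Δ) * (1/54) :=
      mul_lt_mul_of_pos_left hγ13 (mul_pos hγ hΔpos)
    linarith only [hlow, hlt]
  have h2jpos : (0:ℝ) < 2^j := by positivity
  have h27 : (27:ℝ) < d 0 / 2^j := by
    rw [hd0, lt_div_iff₀ h2jpos]
    linarith only [h2j]
  have hM : 3 ≤ e 0 * u^j := by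
    have hx : (0:ℝ) ≤ e 0 * u^j := le_of_lt (mul_pos (hepos 0) (pow_pos hupos j))
    nlinarith [hM3, h27, sq_nonneg (e 0 * u^j - 3), sq_nonneg (e 0 * u^j + 3)]
  have hej : e j ≤ 2 * (e 0 * u^j) := le_trans (hbound j) (by linarith)
  have hdj : d j ≤ 8 * γ * Δ / 2^j := by
    have : d j ≤ (2 * (e 0 * u^j))^3 := by
      rw [← hecube j]
      exact pow_le_pow_left₀ (hepos j).le hej 3
    have h8 : (2 * (e 0 * u^j))^3 = 8 * (d 0 / 2^j) := by
      rw [mul_pow, hM3]; norm_num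
    rw [h8, hd0] at this
    calc d j ≤ 8 * (γ * Δ / 2^j) := this
      _ = 8 * γ * Δ / 2^j := by ring
  refine ⟨hdj, ?_⟩
  -- second inequality
  have hX : (0:ℝ) < Δ / 2^j := by positivity
  have hγle : γ ≤ (Δ / 2^j) ^ (-(3:ℝ)/4) := by
    have h1 : γ ^ ((4:ℝ)/3) ≤ (Δ / 2^j)⁻¹ := by
      rw [inv_div, le_div_iff₀ hΔpos]
      exact hhigh
    have h3 : (γ ^ ((4:ℝ)/3)) ^ ((3:ℝ)/4) = γ := by
      rw [← Real.rpow_mul hγ.le]; norm_num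
    have h4 : ((Δ / 2^j)⁻¹) ^ ((3:ℝ)/4) = (Δ / 2^j) ^ (-(3:ℝ)/4) := by
      rw [Real.inv_rpow hX.le, ← Real.rpow_neg hX.le]
      norm_num
    rw [← h3, ← h4]
    exact Real.rpow_le_rpow (Real.rpow_nonneg hγ.le _) h1 (by norm_num)
  have hkey : γ * (Δ / 2^j) ≤ (Δ / 2^j) ^ ((1:ℝ)/4) := by
    calc γ * (Δ / 2^j) ≤ (Δ / 2^j) ^ (-(3:ℝ)/4) * (Δ / 2^j) :=
          mul_le_mul_of_nonneg_right hγle hX.le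
      _ = (Δ / 2^j) ^ ((1:ℝ)/4) := by
          nth_rewrite 2 [← Real.rpow_one (Δ / 2^j)]
          rw [← Real.rpow_add hX]
          congr 1
          norm_num
  calc 8 * γ * Δ / 2^j = 8 * (γ * (Δ / 2^j)) := by ring
    _ ≤ 8 * (Δ / 2^j) ^ ((1:ℝ)/4) := by linarith
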